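/- Let H be an r×n binary matrix. For a subset T of row indices, let z_T be the number of columns of H that are zero in all rows indexed by T, and for p ≥ 0 let Y(T,p) be the number of p-element column-subsets Y such that the submatrix of H on rows T and columns Y has every row of weight exactly one and every column nonzero. Then the number S_l of stopping sets of H of size l (subsets S of columns such that no row of H restricted to S has weight exactly one) equals ∑_{T ⊆ {1,...,r}} (-1)^{|T|} ∑_{p=0}^{l} Y(T,p) · C(z_T, l-p). -/

import Mathlib

open Finset

/-- A subset `S` of column indices is a stopping set of `H` if no row of `H`
restricted to `S` has weight exactly one. -/
def IsStoppingSet {r n : ℕ} (H : Matrix (Fin r) (Fin n) (ZMod 2)) (S : Finset (Fin n)) : Prop :=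
  ∀ i, (S.filter fun j => H i j = 1).card ≠ 1

/-- The number of stopping sets of `H` of size `l`. -/
noncomputable def numStoppingSets {r n : ℕ} (H : Matrix (Fin r) (Fin n) (ZMod 2)) (l : ℕ) : ℕ :=
  Nat.card {S : Finset (Fin n) // IsStoppingSet H S ∧ S.card = l}

/-- `z T`: the number of columns of `H` vanishing on all rows indexed by `T`. -/
noncomputable def zCount {r n : ℕ} (H : Matrix (Fin r) (Fin n) (ZMod 2))
    (T : Finset (Fin r)) : ℕ :=
  Nat.card {j : Fin n // ∀ i ∈ T, H i j = 0}

/-- `Y T p`: the number of `p`-element column subsets `Y` such that the submatrix of `H`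
on rows `T` and columns `Y` has every row of weight exactly one and every column nonzero. -/
noncomputable def yCount {r n : ℕ} (H : Matrix (Fin r) (Fin n) (ZMod 2))
    (T : Finset (Fin r)) (p : ℕ) : ℕ :=
  Nat.card {Y : Finset (Fin n) // Y.card = p ∧
    (∀ i ∈ T, (Y.filter fun j => H i j = 1).card = 1) ∧
    (∀ j ∈ Y, ∃ i ∈ T, H i j = 1)}


private lemma zmod2_cases (a : ZMod 2) : a ≠ 1 ↔ a = 0 := by revert a; decide

private lemma countA {r n : ℕ} (H : Matrix (Fin r) (Fin n) (ZMod 2)) (l : ℕ) (T : Finset (Fin r)) :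
    (univ.filter fun S : Finset (Fin n) =>
        S.card = l ∧ ∀ i ∈ T, (S.filter fun j => H i j = 1).card = 1).card
      = ∑ p ∈ Finset.range (l + 1),
          yCount H T p * (zCount H T).choose (l - p) := by
  classical
  simp only [yCount, zCount]
  have hdich : ∀ j : Fin n, (¬ ∃ i ∈ T, H i j = 1) ↔ (∀ i ∈ T, H i j = 0) := by
    intro j
    push_neg
    exact forall₂_congr fun i _ => zmod2_cases _
  set Zc : Finset (Fin n) := univ.filter (fun j => ∀ i ∈ T, H i j = 0) with hZc
  have hz : Nat.card {j : Fin n // ∀ i ∈ T, H i j = 0} = Zc.card := by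
    rw [Nat.card_eq_fintype_card, Fintype.card_subtype]
  rw [Finset.card_eq_sum_card_fiberwise
    (f := fun S : Finset (Fin n) => (S.filter fun j => ∃ i ∈ T, H i j = 1).card)
    (t := Finset.range (l + 1)) (fun S hS => by
      simp only [Finset.mem_coe, mem_filter, mem_univ, true_and] at hS
      simp only [Finset.mem_coe, Finset.mem_range, Nat.lt_succ_iff]
      exact hS.1 ▸ Finset.card_filter_le _ _)]
  refine Finset.sum_congr rfl fun p hp => ?_
  have hpl : p ≤ l := Nat.lt_succ_iff.mp (Finset.mem_range.mp hp)
  rw [Nat.card_eq_fintype_card, Fintype.card_subtype, hz, ← Finset.card_powersetCard,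
    ← Finset.card_product]
  refine Finset.card_bij'
    (fun S _ => (S.filter (fun j => ∃ i ∈ T, H i j = 1),
      S.filter (fun j => ∀ i ∈ T, H i j = 0)))
    (fun YZ _ => YZ.1 ∪ YZ.2) ?hi ?hj ?left ?right
  case hi =>
    intro S hS
    simp only [mem_filter, mem_univ, true_and] at hS
    obtain ⟨⟨hcard, hrows⟩, hfib⟩ := hS
    have h1 : S.filter (fun j => ∃ i ∈ T, H i j = 1) ∈
        univ.filter (fun Y : Finset (Fin n) => Y.card = p ∧
          (∀ i ∈ T, (Y.filter fun j => H i j = 1).card = 1) ∧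
          (∀ j ∈ Y, ∃ i ∈ T, H i j = 1)) := by
      refine Finset.mem_filter.mpr ⟨Finset.mem_univ _, hfib, fun i hi => ?_,
        fun j hj => (Finset.mem_filter.mp hj).2⟩
      rw [Finset.filter_filter]
      rw [Finset.filter_congr (fun j _ =>
        ⟨fun h => h.2, fun h => ⟨⟨i, hi, h⟩, h⟩⟩)]
      exact hrows i hi
    have h2 : S.filter (fun j => ∀ i ∈ T, H i j = 0) ∈ Zc.powersetCard (l - p) := by
      refine Finset.mem_powersetCard.mpr ⟨fun j hj =>
        Finset.mem_filter.mpr ⟨Finset.mem_univ _, (Finset.mem_filter.mp hj).2⟩, ?_⟩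
      have heq : S.filter (fun j => ∀ i ∈ T, H i j = 0)
          = S.filter (fun j => ¬ ∃ i ∈ T, H i j = 1) :=
        (Finset.filter_congr (fun j _ => (hdich j).symm))
      rw [heq, Finset.filter_not, Finset.card_sdiff_of_subset (Finset.filter_subset _ _), hcard, hfib]
    exact Finset.mk_mem_product h1 h2
  case hj =>
    rintro ⟨Y, Z⟩ hYZ
    simp only [Finset.mem_product, mem_filter, mem_univ, true_and,
      Finset.mem_powersetCard] at hYZ
    obtain ⟨⟨hYcard, hYrows, hYsupp⟩, hZsub, hZcard⟩ := hYZ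
    have hZzero : ∀ j ∈ Z, ∀ i ∈ T, H i j = 0 := fun j hj =>
      (Finset.mem_filter.mp (hZsub hj)).2
    have hdisj : Disjoint Y Z := by
      rw [Finset.disjoint_left]
      intro j hj1 hj2
      obtain ⟨i, hi, h1⟩ := hYsupp j hj1
      exact absurd (hZzero j hj2 i hi) (by rw [h1]; decide)
    have hfilY : (Y ∪ Z).filter (fun j => ∃ i ∈ T, H i j = 1) = Y := by
      rw [Finset.filter_union]
      rw [Finset.filter_eq_self.mpr hYsupp]
      rw [Finset.filter_eq_empty_iff.mpr (fun j hj => (hdich j).mpr (hZzero j hj)), Finset.union_empty]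
    simp only [mem_filter, mem_univ, true_and]
    refine ⟨⟨?_, fun i hi => ?_⟩, ?_⟩
    · rw [Finset.card_union_of_disjoint hdisj, hYcard, hZcard, Nat.add_sub_cancel' hpl]
    · have hZe : Z.filter (fun j => H i j = 1) = ∅ :=
        Finset.filter_eq_empty_iff.mpr (fun j hj => by rw [hZzero j hj i hi]; decide)
      rw [Finset.filter_union, hZe, Finset.union_empty]
      exact hYrows i hi
    · rw [hfilY, hYcard]
  case left =>
    intro S hS
    show S.filter (fun j => ∃ i ∈ T, H i j = 1) ∪ S.filter (fun j => ∀ i ∈ T, H i j = 0) = S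
    rw [Finset.filter_congr (fun j (_ : j ∈ S) => (hdich j).symm), Finset.filter_not,
      Finset.union_sdiff_of_subset (Finset.filter_subset _ _)]
  case right =>
    rintro ⟨Y, Z⟩ hYZ
    simp only [Finset.mem_product, mem_filter, mem_univ, true_and,
      Finset.mem_powersetCard] at hYZ
    obtain ⟨⟨hYcard, hYrows, hYsupp⟩, hZsub, hZcard⟩ := hYZ
    have hZzero : ∀ j ∈ Z, ∀ i ∈ T, H i j = 0 := fun j hj =>
      (Finset.mem_filter.mp (hZsub hj)).2
    have hfilY : (Y ∪ Z).filter (fun j => ∃ i ∈ T, H i j = 1) = Y := by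
      rw [Finset.filter_union, Finset.filter_eq_self.mpr hYsupp,
        Finset.filter_eq_empty_iff.mpr (fun j hj => (hdich j).mpr (hZzero j hj)), Finset.union_empty]
    have hfilZ : (Y ∪ Z).filter (fun j => ∀ i ∈ T, H i j = 0) = Z := by
      rw [Finset.filter_union, Finset.filter_eq_self.mpr hZzero,
        Finset.filter_eq_empty_iff.mpr (fun j hj h => ?_), Finset.empty_union]
      obtain ⟨i, hi, h1⟩ := hYsupp j hj
      exact absurd (h i hi) (by rw [h1]; decide)
    show ((Y ∪ Z).filter (fun j => ∃ i ∈ T, H i j = 1),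
      (Y ∪ Z).filter (fun j => ∀ i ∈ T, H i j = 0)) = (Y, Z)
    rw [hfilY, hfilZ]

/-- Inclusion–exclusion formula for the number of stopping sets of size `l`. -/
theorem stmt3 {r n : ℕ} (H : Matrix (Fin r) (Fin n) (ZMod 2)) (l : ℕ) :
    (numStoppingSets H l : ℤ) =
      ∑ T : Finset (Fin r), (-1 : ℤ) ^ T.card *
        ∑ p ∈ Finset.range (l + 1),
          (yCount H T p : ℤ) * ((zCount H T).choose (l - p)) := by
  classical
  have key : ∀ S : Finset (Fin n), (if IsStoppingSet H S then (1:ℤ) else 0)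
      = ∑ T : Finset (Fin r), (-1:ℤ)^T.card *
          (if (∀ i ∈ T, (S.filter fun j => H i j = 1).card = 1) then 1 else 0) := by
    intro S
    have h1 : ∀ T : Finset (Fin r),
        (-1:ℤ)^T.card * (if (∀ i ∈ T, (S.filter fun j => H i j = 1).card = 1) then 1 else 0)
          = if (∀ i ∈ T, (S.filter fun j => H i j = 1).card = 1) then (-1:ℤ)^T.card else 0 := by
      intro T; split <;> simp
    rw [Finset.sum_congr rfl fun T _ => h1 T, ← Finset.sum_filter]
    have h2 : (univ.filter fun T : Finset (Fin r) =>
        ∀ i ∈ T, (S.filter fun j => H i j = 1).card = 1)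
        = (univ.filter fun i : Fin r => (S.filter fun j => H i j = 1).card = 1).powerset := by
      ext T
      simp [Finset.mem_powerset, Finset.subset_iff]
    rw [h2, Finset.sum_powerset_neg_one_pow_card]
    congr 1
    simp [IsStoppingSet, Finset.filter_eq_empty_iff, eq_iff_iff]
  have hnum : numStoppingSets H l =
      ((univ.filter fun S : Finset (Fin n) => S.card = l).filter fun S => IsStoppingSet H S).card := by
    rw [numStoppingSets, Nat.card_eq_fintype_card, Fintype.card_subtype, Finset.filter_filter]
    congr 1
    apply Finset.filter_congr
    intro S _
    exact and_comm
  calc (numStoppingSets H l : ℤ)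
      = ∑ S ∈ univ.filter (fun S : Finset (Fin n) => S.card = l),
          (if IsStoppingSet H S then (1:ℤ) else 0) := by rw [hnum, Finset.sum_boole]
    _ = ∑ S ∈ univ.filter (fun S : Finset (Fin n) => S.card = l),
          ∑ T : Finset (Fin r), (-1:ℤ)^T.card *
            (if (∀ i ∈ T, (S.filter fun j => H i j = 1).card = 1) then 1 else 0) :=
        Finset.sum_congr rfl fun S _ => key S
    _ = ∑ T : Finset (Fin r), ∑ S ∈ univ.filter (fun S : Finset (Fin n) => S.card = l),
          (-1:ℤ)^T.card *
            (if (∀ i ∈ T, (S.filter fun j => H i j = 1).card = 1) then 1 else 0) :=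
        Finset.sum_comm
    _ = ∑ T : Finset (Fin r), (-1:ℤ)^T.card *
          ((univ.filter fun S : Finset (Fin n) =>
            S.card = l ∧ ∀ i ∈ T, (S.filter fun j => H i j = 1).card = 1).card : ℤ) := by
        refine Finset.sum_congr rfl fun T _ => ?_
        rw [← Finset.mul_sum, Finset.sum_boole, Finset.filter_filter]
    _ = ∑ T : Finset (Fin r), (-1 : ℤ) ^ T.card *
          ∑ p ∈ Finset.range (l + 1),
            (yCount H T p : ℤ) * ((zCount H T).choose (l - p)) := by
        refine Finset.sum_congr rfl fun T _ => ?_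
        rw [countA H l T]
        push_cast
        rfl
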